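/- Let H be the graph constructed from G and ℓ, with target sets X and Y of size ℓ, and let k_s ∈ ℕ with ℓ ≥ k_s + 1. If opt(G) > k_s, then opt_H(X ⇝ Y) > k_s + ℓ. -/

import Mathlib

namespace TSS

variable {V : Type*}

/-- The set of active vertices after `i` steps of the activation process started from `S`. -/
def activeAt (G : SimpleGraph V) (τ : V → ℕ) (S : Set V) : ℕ → Set V
  | 0 => S
  | i + 1 => activeAt G τ S i ∪ { v | τ v ≤ (G.neighborSet v ∩ activeAt G τ S i).ncard }

/-- The active vertex set `𝒜(S) = ⋃ i, 𝒜ⁱ(S)`. -/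
def activeSet (G : SimpleGraph V) (τ : V → ℕ) (S : Set V) : Set V :=
  ⋃ i, activeAt G τ S i

/-- `S` is a target set for `(G, τ)` if it activates every vertex. -/
def IsTargetSet (G : SimpleGraph V) (τ : V → ℕ) (S : Set V) : Prop :=
  activeSet G τ S = Set.univ

/-- Minimum size of a target set. -/
noncomputable def optTS (G : SimpleGraph V) (τ : V → ℕ) : ℕ :=
  sInf { m | ∃ S : Set V, IsTargetSet G τ S ∧ S.ncard = m }

/-- A reconfiguration sequence `Sfam 0 = X, …, Sfam T = Y` of target sets where
consecutive sets differ in exactly one vertex. -/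
structure IsReconfSeq (G : SimpleGraph V) (τ : V → ℕ) (X Y : Set V) (T : ℕ)
    (Sfam : ℕ → Set V) : Prop where
  head : Sfam 0 = X
  last : Sfam T = Y
  target : ∀ t ≤ T, IsTargetSet G τ (Sfam t)
  step : ∀ t < T, (symmDiff (Sfam t) (Sfam (t + 1))).ncard = 1

/-- The size of a reconfiguration sequence: maximum cardinality of any member. -/
noncomputable def seqSize (T : ℕ) (Sfam : ℕ → Set V) : ℕ :=
  (Finset.range (T + 1)).sup fun t => (Sfam t).ncard

/-- `opt_G(X ⇝ Y)`: minimum size over all reconfiguration sequences from `X` to `Y`. -/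
noncomputable def optReconf (G : SimpleGraph V) (τ : V → ℕ) (X Y : Set V) : ℕ :=
  sInf { m | ∃ T Sfam, IsReconfSeq G τ X Y T Sfam ∧ seqSize T Sfam = m }

/-- The four internal vertices of a one-way gadget. -/
inductive GadVert where | t | h | b1 | b2

/-- Index set of the one-way gadgets of the graph `H` built from `G` (with degree
function `d`) and `ℓ`. -/
inductive GadIdx (V : Type*) (ℓ : ℕ) (d : V → ℕ) where
  | vx (v : V) (i : Fin ℓ)
  | xa (i : Fin ℓ) (v : V) (j : Fin (d v))
  | av (v : V) (j : Fin (d v))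
  | vy (v : V) (i : Fin ℓ)
  | yb (i : Fin ℓ) (v : V) (j : Fin (d v))
  | bv (v : V) (j : Fin (d v))

/-- Vertices of the graph `H`: a copy of `V`, the sets `X`, `Y`, `A`, `B`, and the
internal vertices of all one-way gadgets. -/
inductive HVert (V : Type*) (ℓ : ℕ) (d : V → ℕ) where
  | orig (v : V)
  | xx (i : Fin ℓ)
  | yy (i : Fin ℓ)
  | aa (v : V) (j : Fin (d v))
  | bb (v : V) (j : Fin (d v))
  | gad (D : GadIdx V ℓ d) (w : GadVert)

variable {ℓ : ℕ} {d : V → ℕ}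

/-- The tail of a one-way gadget. -/
def gadTail : GadIdx V ℓ d → HVert V ℓ d
  | .vx v _ => .orig v
  | .xa i _ _ => .xx i
  | .av v j => .aa v j
  | .vy v _ => .orig v
  | .yb i _ _ => .yy i
  | .bv v j => .bb v j

/-- The head of a one-way gadget. -/
def gadHead : GadIdx V ℓ d → HVert V ℓ d
  | .vx _ i => .xx i
  | .xa _ v j => .aa v j
  | .av v _ => .orig v
  | .vy _ i => .yy i
  | .yb _ v j => .bb v j
  | .bv v _ => .orig v

/-- Base edge relation of the graph `H`. -/
def HRel (G : SimpleGraph V) (ℓ : ℕ) (d : V → ℕ) : HVert V ℓ d → HVert V ℓ d → Prop :=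
  fun p q =>
    (∃ u v, G.Adj u v ∧ p = .orig u ∧ q = .orig v) ∨
    (∃ D, p = .gad D .t ∧ (q = .gad D .b1 ∨ q = .gad D .b2)) ∨
    (∃ D, p = .gad D .h ∧ (q = .gad D .b1 ∨ q = .gad D .b2)) ∨
    (∃ D, p = gadTail D ∧ q = .gad D .t) ∨
    (∃ D, p = gadHead D ∧ q = .gad D .h)

/-- The graph `H` constructed from `G` (with degree function `d`) and `ℓ`. -/
def graphH (G : SimpleGraph V) (ℓ : ℕ) (d : V → ℕ) : SimpleGraph (HVert V ℓ d) :=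
  SimpleGraph.fromRel (HRel G ℓ d)

/-- The threshold function `τ'` of `H`, where `n` is the number of vertices of `G`. -/
def tauH (τ : V → ℕ) (n ℓ : ℕ) (d : V → ℕ) : HVert V ℓ d → ℕ
  | .orig v => τ v
  | .xx _ => n
  | .yy _ => n
  | .aa _ _ => ℓ
  | .bb _ _ => ℓ
  | .gad _ .t => 1
  | .gad _ .b1 => 1
  | .gad _ .b2 => 1
  | .gad _ .h => 2

/-- The vertex set `X = {x₁, …, x_ℓ}` of `H`. -/
def XSet (V : Type*) (ℓ : ℕ) (d : V → ℕ) : Set (HVert V ℓ d) := Set.range HVert.xx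

/-- The vertex set `Y = {y₁, …, y_ℓ}` of `H`. -/
def YSet (V : Type*) (ℓ : ℕ) (d : V → ℕ) : Set (HVert V ℓ d) := Set.range HVert.yy

/-- The copy of `V` inside `V(H)`. -/
def OrigSet (V : Type*) (ℓ : ℕ) (d : V → ℕ) : Set (HVert V ℓ d) := Set.range HVert.orig

/-- The vertex set `A = {a_{v,j}}` of `H`. -/
def ASet (V : Type*) (ℓ : ℕ) (d : V → ℕ) : Set (HVert V ℓ d) :=
  { p | ∃ v j, p = HVert.aa v j }

/-- The vertex set `B = {b_{v,j}}` of `H`. -/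
def BSet (V : Type*) (ℓ : ℕ) (d : V → ℕ) : Set (HVert V ℓ d) :=
  { p | ∃ v j, p = HVert.bb v j }

end TSS

namespace TSS

deriving instance DecidableEq for GadVert
instance : Fintype GadVert := ⟨{.t, .h, .b1, .b2}, by intro x; cases x <;> simp⟩

variable {V : Type*} {ℓ : ℕ} {d : V → ℕ}

lemma instTrueOfFiniteGadIdx : Finite (GadIdx V ℓ d) → True := fun _ => trivial

private def gadIdxEnc : GadIdx V ℓ d → Fin 6 × Option (Fin ℓ) × (Σ v : V, Option (Fin (d v)))
  | .vx v i => (0, some i, ⟨v, none⟩)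
  | .xa i v j => (1, some i, ⟨v, some j⟩)
  | .av v j => (2, none, ⟨v, some j⟩)
  | .vy v i => (3, some i, ⟨v, none⟩)
  | .yb i v j => (4, some i, ⟨v, some j⟩)
  | .bv v j => (5, none, ⟨v, some j⟩)

instance [Finite V] : Finite (GadIdx V ℓ d) := by
  have : Function.Injective (gadIdxEnc (V := V) (ℓ := ℓ) (d := d)) := by
    intro a b hab
    cases a <;> cases b <;> simp_all [gadIdxEnc] <;> aesop
  exact Finite.of_injective _ this

private def hVertEnc : HVert V ℓ d →
    (V ⊕ Fin ℓ ⊕ Fin ℓ ⊕ (Σ v : V, Fin (d v)) ⊕ (Σ v : V, Fin (d v)) ⊕ (GadIdx V ℓ d × GadVert))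
  | .orig v => Sum.inl v
  | .xx i => Sum.inr (Sum.inl i)
  | .yy i => Sum.inr (Sum.inr (Sum.inl i))
  | .aa v j => Sum.inr (Sum.inr (Sum.inr (Sum.inl ⟨v, j⟩)))
  | .bb v j => Sum.inr (Sum.inr (Sum.inr (Sum.inr (Sum.inl ⟨v, j⟩))))
  | .gad D w => Sum.inr (Sum.inr (Sum.inr (Sum.inr (Sum.inr (D, w)))))

instance [Finite V] : Finite (HVert V ℓ d) := by
  have : Function.Injective (hVertEnc (V := V) (ℓ := ℓ) (d := d)) := by
    intro a b hab
    cases a <;> cases b <;> simp_all [hVertEnc]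
  exact Finite.of_injective _ this

end TSS
namespace TSS

variable {W : Type*} {Γ : SimpleGraph W} {θ : W → ℕ} {S : Set W}

lemma activeAt_subset_succ (i : ℕ) : activeAt Γ θ S i ⊆ activeAt Γ θ S (i + 1) := by
  intro w hw; exact Or.inl hw

lemma activeAt_mono {i j : ℕ} (hij : i ≤ j) : activeAt Γ θ S i ⊆ activeAt Γ θ S j := by
  induction j with
  | zero => simp_all
  | succ j ih =>
    rcases Nat.lt_or_ge i (j+1) with h | h
    · exact (ih (by omega)).trans (activeAt_subset_succ j)
    · have : i = j + 1 := by omega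
      subst this; exact subset_rfl

lemma subset_activeSet : S ⊆ activeSet Γ θ S := by
  intro w hw; exact Set.mem_iUnion.2 ⟨0, hw⟩

lemma activeAt_subset_activeSet (i : ℕ) : activeAt Γ θ S i ⊆ activeSet Γ θ S := by
  intro w hw; exact Set.mem_iUnion.2 ⟨i, hw⟩

/-- Blocking lemma: if `F` contains `S` and no vertex outside `F` can fire using only
neighbours in `F`, then the active set stays inside `F`. -/
lemma activeSet_subset_of_closed [Finite W] {F : Set W} (hSF : S ⊆ F)
    (hcl : ∀ w, θ w ≤ (Γ.neighborSet w ∩ F).ncard → w ∈ F) :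
    activeSet Γ θ S ⊆ F := by
  have main : ∀ i, activeAt Γ θ S i ⊆ F := by
    intro i
    induction i with
    | zero => exact hSF
    | succ i ih =>
      intro w hw
      rcases hw with hw | hw
      · exact ih hw
      · refine hcl w (le_trans hw ?_)
        exact Set.ncard_le_ncard (Set.inter_subset_inter_right _ ih) (Set.toFinite _)
  intro w hw
  rcases Set.mem_iUnion.1 hw with ⟨i, hi⟩
  exact main i hi

/-- Closure property: the active set is closed under activation. -/
lemma mem_activeSet_of_card [Finite W] {w : W}
    (hw : θ w ≤ (Γ.neighborSet w ∩ activeSet Γ θ S).ncard) : w ∈ activeSet Γ θ S := by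
  classical
  have hfin : (Γ.neighborSet w ∩ activeSet Γ θ S).Finite := Set.toFinite _
  choose f hf using fun (u : W) (hu : u ∈ activeSet Γ θ S) => Set.mem_iUnion.1 hu
  set t : Finset W := hfin.toFinset with ht
  have htmem : ∀ u ∈ t, u ∈ activeSet Γ θ S := by
    intro u hu
    exact ((Set.Finite.mem_toFinset hfin).1 hu).2
  set N : ℕ := t.attach.sup (fun u => f u.1 (htmem u.1 u.2)) with hN
  refine Set.mem_iUnion.2 ⟨N + 1, Or.inr ?_⟩
  show θ w ≤ (Γ.neighborSet w ∩ activeAt Γ θ S N).ncard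
  refine le_trans hw (Set.ncard_le_ncard ?_ (Set.toFinite _))
  rintro u ⟨hu1, hu2⟩
  refine ⟨hu1, activeAt_mono ?_ (hf u hu2)⟩
  have hut : u ∈ t := (Set.Finite.mem_toFinset hfin).2 ⟨hu1, hu2⟩
  exact Finset.le_sup (f := fun u : {x // x ∈ t} => f u.1 (htmem u.1 u.2))
    (Finset.mem_attach t ⟨u, hut⟩)

/-- Monotonicity in the seed set. -/
lemma activeSet_mono [Finite W] {S' : Set W} (hSS : S ⊆ S') :
    activeSet Γ θ S ⊆ activeSet Γ θ S' := by
  have main : ∀ i, activeAt Γ θ S i ⊆ activeAt Γ θ S' i := by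
    intro i
    induction i with
    | zero => exact hSS
    | succ i ih =>
      rintro w (hw | hw)
      · exact Or.inl (ih hw)
      · refine Or.inr (show θ w ≤ _ from le_trans hw ?_)
        exact Set.ncard_le_ncard (Set.inter_subset_inter_right _ ih) (Set.toFinite _)
  intro w hw
  rcases Set.mem_iUnion.1 hw with ⟨i, hi⟩
  exact activeAt_subset_activeSet i (main i hi)

lemma isTargetSet_mono [Finite W] {S' : Set W} (hSS : S ⊆ S') (h : IsTargetSet Γ θ S) :
    IsTargetSet Γ θ S' := by
  refine Set.eq_univ_of_univ_subset ?_
  rw [← h]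
  exact activeSet_mono hSS
end TSS
namespace TSS

variable {V : Type*} {ℓ : ℕ} {d : V → ℕ} {G : SimpleGraph V}

@[simp] lemma gadTail_ne_gad (D D' : GadIdx V ℓ d) (w : GadVert) : gadTail D ≠ .gad D' w := by
  cases D <;> simp [gadTail]

@[simp] lemma gadHead_ne_gad (D D' : GadIdx V ℓ d) (w : GadVert) : gadHead D ≠ .gad D' w := by
  cases D <;> simp [gadHead]

@[simp] lemma gad_ne_gadTail (D D' : GadIdx V ℓ d) (w : GadVert) : HVert.gad D' w ≠ gadTail D := by
  cases D <;> simp [gadTail]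

@[simp] lemma gad_ne_gadHead (D D' : GadIdx V ℓ d) (w : GadVert) : HVert.gad D' w ≠ gadHead D := by
  cases D <;> simp [gadHead]

lemma adj_gad_t {D : GadIdx V ℓ d} {u : HVert V ℓ d}
    (h : (graphH G ℓ d).Adj (.gad D .t) u) :
    u = gadTail D ∨ u = .gad D .b1 ∨ u = .gad D .b2 := by
  rw [graphH, SimpleGraph.fromRel_adj] at h
  obtain ⟨hne, h | h⟩ := h <;>
    rcases h with ⟨a, b, hab, hp, hq⟩ | ⟨D', hp, hq⟩ | ⟨D', hp, hq⟩ | ⟨D', hp, hq⟩ | ⟨D', hp, hq⟩ <;>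
    simp_all <;> aesop

end TSS
namespace TSS

variable {V : Type*} {ℓ : ℕ} {d : V → ℕ} {G : SimpleGraph V}

lemma adj_gad_h {D : GadIdx V ℓ d} {u : HVert V ℓ d}
    (h : (graphH G ℓ d).Adj (.gad D .h) u) :
    u = gadHead D ∨ u = .gad D .b1 ∨ u = .gad D .b2 := by
  rw [graphH, SimpleGraph.fromRel_adj] at h
  obtain ⟨hne, h | h⟩ := h <;>
    rcases h with ⟨a, b, hab, hp, hq⟩ | ⟨D', hp, hq⟩ | ⟨D', hp, hq⟩ | ⟨D', hp, hq⟩ | ⟨D', hp, hq⟩ <;>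
    simp_all

lemma adj_gad_b1 {D : GadIdx V ℓ d} {u : HVert V ℓ d}
    (h : (graphH G ℓ d).Adj (.gad D .b1) u) :
    u = .gad D .t ∨ u = .gad D .h := by
  rw [graphH, SimpleGraph.fromRel_adj] at h
  obtain ⟨hne, h | h⟩ := h <;>
    rcases h with ⟨a, b, hab, hp, hq⟩ | ⟨D', hp, hq⟩ | ⟨D', hp, hq⟩ | ⟨D', hp, hq⟩ | ⟨D', hp, hq⟩ <;>
    simp_all

lemma adj_gad_b2 {D : GadIdx V ℓ d} {u : HVert V ℓ d}
    (h : (graphH G ℓ d).Adj (.gad D .b2) u) :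
    u = .gad D .t ∨ u = .gad D .h := by
  rw [graphH, SimpleGraph.fromRel_adj] at h
  obtain ⟨hne, h | h⟩ := h <;>
    rcases h with ⟨a, b, hab, hp, hq⟩ | ⟨D', hp, hq⟩ | ⟨D', hp, hq⟩ | ⟨D', hp, hq⟩ | ⟨D', hp, hq⟩ <;>
    simp_all

lemma adj_orig {v : V} {u : HVert V ℓ d}
    (h : (graphH G ℓ d).Adj (.orig v) u) :
    (∃ w, u = .orig w ∧ G.Adj v w) ∨ (∃ i, u = .gad (.vx v i) .t) ∨
      (∃ i, u = .gad (.vy v i) .t) ∨ (∃ j, u = .gad (.av v j) .h) ∨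
      (∃ j, u = .gad (.bv v j) .h) := by
  rw [graphH, SimpleGraph.fromRel_adj] at h
  obtain ⟨hne, h | h⟩ := h <;>
    rcases h with ⟨a, b, hab, hp, hq⟩ | ⟨D', hp, hq⟩ | ⟨D', hp, hq⟩ | ⟨D', hp, hq⟩ | ⟨D', hp, hq⟩ <;>
    (try cases D') <;> simp_all [gadTail, gadHead] <;> first | (apply SimpleGraph.Adj.symm; assumption) | (subst hp; exact ⟨_, HEq.refl _⟩)

lemma adj_xx {i : Fin ℓ} {u : HVert V ℓ d}
    (h : (graphH G ℓ d).Adj (.xx i) u) :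
    (∃ v, u = .gad (.vx v i) .h) ∨ (∃ v j, u = .gad (.xa i v j) .t) := by
  rw [graphH, SimpleGraph.fromRel_adj] at h
  obtain ⟨hne, h | h⟩ := h <;>
    rcases h with ⟨a, b, hab, hp, hq⟩ | ⟨D', hp, hq⟩ | ⟨D', hp, hq⟩ | ⟨D', hp, hq⟩ | ⟨D', hp, hq⟩ <;>
    (try cases D') <;> simp_all [gadTail, gadHead] <;> aesop

lemma adj_yy {i : Fin ℓ} {u : HVert V ℓ d}
    (h : (graphH G ℓ d).Adj (.yy i) u) :
    (∃ v, u = .gad (.vy v i) .h) ∨ (∃ v j, u = .gad (.yb i v j) .t) := by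
  rw [graphH, SimpleGraph.fromRel_adj] at h
  obtain ⟨hne, h | h⟩ := h <;>
    rcases h with ⟨a, b, hab, hp, hq⟩ | ⟨D', hp, hq⟩ | ⟨D', hp, hq⟩ | ⟨D', hp, hq⟩ | ⟨D', hp, hq⟩ <;>
    (try cases D') <;> simp_all [gadTail, gadHead] <;> aesop

lemma adj_aa {v : V} {j : Fin (d v)} {u : HVert V ℓ d}
    (h : (graphH G ℓ d).Adj (.aa v j) u) :
    (∃ i, u = .gad (.xa i v j) .h) ∨ u = .gad (.av v j) .t := by
  rw [graphH, SimpleGraph.fromRel_adj] at h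
  obtain ⟨hne, h | h⟩ := h <;>
    rcases h with ⟨a, b, hab, hp, hq⟩ | ⟨D', hp, hq⟩ | ⟨D', hp, hq⟩ | ⟨D', hp, hq⟩ | ⟨D', hp, hq⟩ <;>
    (try cases D') <;> simp_all [gadTail, gadHead] <;> aesop

lemma adj_bb {v : V} {j : Fin (d v)} {u : HVert V ℓ d}
    (h : (graphH G ℓ d).Adj (.bb v j) u) :
    (∃ i, u = .gad (.yb i v j) .h) ∨ u = .gad (.bv v j) .t := by
  rw [graphH, SimpleGraph.fromRel_adj] at h
  obtain ⟨hne, h | h⟩ := h <;>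
    rcases h with ⟨a, b, hab, hp, hq⟩ | ⟨D', hp, hq⟩ | ⟨D', hp, hq⟩ | ⟨D', hp, hq⟩ | ⟨D', hp, hq⟩ <;>
    (try cases D') <;> simp_all [gadTail, gadHead] <;> aesop

end TSS
namespace TSS

variable {V : Type*} {ℓ : ℕ} {d : V → ℕ} {G : SimpleGraph V}

@[simp] lemma gadVert_t_ne_b1 : (GadVert.t : GadVert) ≠ GadVert.b1 := by intro h; cases h
@[simp] lemma gadVert_b1_ne_b2 : (GadVert.b1 : GadVert) ≠ GadVert.b2 := by intro h; cases h

lemma adjI_tail (D : GadIdx V ℓ d) : (graphH G ℓ d).Adj (gadTail D) (.gad D .t) := by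
  rw [graphH, SimpleGraph.fromRel_adj]
  exact ⟨by simp, Or.inl (Or.inr (Or.inr (Or.inr (Or.inl ⟨D, rfl, rfl⟩))))⟩

lemma adjI_head (D : GadIdx V ℓ d) : (graphH G ℓ d).Adj (gadHead D) (.gad D .h) := by
  rw [graphH, SimpleGraph.fromRel_adj]
  exact ⟨by simp, Or.inl (Or.inr (Or.inr (Or.inr (Or.inr ⟨D, rfl, rfl⟩))))⟩

lemma adjI_tb1 (D : GadIdx V ℓ d) : (graphH G ℓ d).Adj (.gad D .t) (.gad D .b1) := by
  rw [graphH, SimpleGraph.fromRel_adj]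
  refine ⟨by simp, Or.inl (Or.inr (Or.inl ⟨D, rfl, Or.inl rfl⟩))⟩

lemma adjI_tb2 (D : GadIdx V ℓ d) : (graphH G ℓ d).Adj (.gad D .t) (.gad D .b2) := by
  rw [graphH, SimpleGraph.fromRel_adj]
  refine ⟨by simp, Or.inl (Or.inr (Or.inl ⟨D, rfl, Or.inr rfl⟩))⟩

lemma adjI_hb1 (D : GadIdx V ℓ d) : (graphH G ℓ d).Adj (.gad D .h) (.gad D .b1) := by
  rw [graphH, SimpleGraph.fromRel_adj]
  refine ⟨by simp, Or.inl (Or.inr (Or.inr (Or.inl ⟨D, rfl, Or.inl rfl⟩)))⟩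

lemma adjI_hb2 (D : GadIdx V ℓ d) : (graphH G ℓ d).Adj (.gad D .h) (.gad D .b2) := by
  rw [graphH, SimpleGraph.fromRel_adj]
  refine ⟨by simp, Or.inl (Or.inr (Or.inr (Or.inl ⟨D, rfl, Or.inr rfl⟩)))⟩

lemma adjI_orig {v w : V} (h : G.Adj v w) : (graphH G ℓ d).Adj (.orig v) (.orig w) := by
  rw [graphH, SimpleGraph.fromRel_adj]
  exact ⟨by simp [h.ne], Or.inl (Or.inl ⟨v, w, h, rfl, rfl⟩)⟩

/-- Lower bound on `ncard` via an injection. -/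
lemma le_ncard_of_inj {α : Type*} [Finite α] {s : Set α} {κ : Type*} (f : κ → α)
    (hinj : Function.Injective f) (hsub : Set.range f ⊆ s) : Nat.card κ ≤ s.ncard := by
  have h1 : Nat.card κ = (Set.range f).ncard := by
    rw [← Nat.card_coe_set_eq, Nat.card_range_of_injective hinj]
  rw [h1]
  exact Set.ncard_le_ncard hsub (Set.toFinite _)

section Fire

variable {W : Type*} [Finite W] {Γ : SimpleGraph W} {θ : W → ℕ} {S : Set W}

lemma mem_activeSet_of_inj {w : W} {κ : Type*} (f : κ → W) (hinj : Function.Injective f)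
    (hadj : ∀ k, Γ.Adj w (f k)) (hact : ∀ k, f k ∈ activeSet Γ θ S)
    (hθ : θ w ≤ Nat.card κ) : w ∈ activeSet Γ θ S := by
  refine mem_activeSet_of_card (le_trans hθ (le_ncard_of_inj f hinj ?_))
  rintro u ⟨k, rfl⟩
  exact ⟨hadj k, hact k⟩

lemma mem_activeSet_of_one {w u : W} (hθ : θ w ≤ 1) (hadj : Γ.Adj w u)
    (hact : u ∈ activeSet Γ θ S) : w ∈ activeSet Γ θ S := by
  refine mem_activeSet_of_inj (fun _ : Unit => u) (fun _ _ _ => rfl) (fun _ => hadj)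
    (fun _ => hact) (by simpa using hθ)

lemma mem_activeSet_of_two {w u u' : W} (hθ : θ w ≤ 2) (hne : u ≠ u') (hadj : Γ.Adj w u)
    (hadj' : Γ.Adj w u') (hact : u ∈ activeSet Γ θ S) (hact' : u' ∈ activeSet Γ θ S) :
    w ∈ activeSet Γ θ S := by
  refine mem_activeSet_of_inj (fun b : Bool => if b then u else u') ?_ ?_ ?_ (by simpa using hθ)
  · intro a b hab
    cases a <;> cases b <;> simp_all
  · intro k; cases k <;> simpa
  · intro k; cases k <;> simpa

end Fire

end TSS
namespace TSS

section Cascade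

variable {V : Type*} [Fintype V] {ℓ : ℕ} {d : V → ℕ} (G : SimpleGraph V) (τ : V → ℕ)

local notation "H" => graphH G ℓ d
local notation "θH" => tauH τ (Fintype.card V) ℓ d

variable {S : Set (HVert V ℓ d)}

/-- If the tail of a gadget is active, the whole gadget becomes active. -/
lemma int_flow_tail {D : GadIdx V ℓ d} (ht : gadTail D ∈ activeSet H θH S) :
    ∀ g, HVert.gad D g ∈ activeSet H θH S := by
  have hT : HVert.gad D .t ∈ activeSet H θH S :=
    mem_activeSet_of_one (by simp [tauH]) ((adjI_tail D).symm) ht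
  have hB1 : HVert.gad D .b1 ∈ activeSet H θH S :=
    mem_activeSet_of_one (by simp [tauH]) ((adjI_tb1 D).symm) hT
  have hB2 : HVert.gad D .b2 ∈ activeSet H θH S :=
    mem_activeSet_of_one (by simp [tauH]) ((adjI_tb2 D).symm) hT
  have hH : HVert.gad D .h ∈ activeSet H θH S :=
    mem_activeSet_of_two (by simp [tauH]) (by simp) (adjI_hb1 D) (adjI_hb2 D) hB1 hB2
  intro g; cases g <;> assumption

/-- If any internal vertex of a gadget is active, all four are. -/
lemma int_flow_any {D : GadIdx V ℓ d} {g : GadVert}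
    (hg : HVert.gad D g ∈ activeSet H θH S) :
    ∀ g', HVert.gad D g' ∈ activeSet H θH S := by
  have key : HVert.gad D .t ∈ activeSet H θH S ∨ HVert.gad D .b1 ∈ activeSet H θH S := by
    cases g with
    | t => exact Or.inl hg
    | b1 => exact Or.inr hg
    | b2 => exact Or.inl (mem_activeSet_of_one (by simp [tauH]) (adjI_tb2 D) hg)
    | h => exact Or.inr (mem_activeSet_of_one (by simp [tauH]) ((adjI_hb1 D).symm) hg)
  have hT : HVert.gad D .t ∈ activeSet H θH S := by
    rcases key with h | h
    · exact h
    · exact mem_activeSet_of_one (by simp [tauH]) (adjI_tb1 D) h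
  have hB1 : HVert.gad D .b1 ∈ activeSet H θH S :=
    mem_activeSet_of_one (by simp [tauH]) ((adjI_tb1 D).symm) hT
  have hB2 : HVert.gad D .b2 ∈ activeSet H θH S :=
    mem_activeSet_of_one (by simp [tauH]) ((adjI_tb2 D).symm) hT
  have hH : HVert.gad D .h ∈ activeSet H θH S :=
    mem_activeSet_of_two (by simp [tauH]) (by simp) (adjI_hb1 D) (adjI_hb2 D) hB1 hB2
  intro g'; cases g' <;> assumption

/-- If every original vertex is active, everything is active. -/
lemma univ_of_orig (hτd : ∀ v, τ v ≤ d v)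
    (horig : ∀ v, HVert.orig v ∈ activeSet H θH S) : IsTargetSet H θH S := by
  -- gadgets with orig tails
  have hvx : ∀ (v : V) (i : Fin ℓ) g, HVert.gad (.vx v i) g ∈ activeSet H θH S :=
    fun v i g => int_flow_tail G τ (D := .vx v i) (horig v) g
  have hvy : ∀ (v : V) (i : Fin ℓ) g, HVert.gad (.vy v i) g ∈ activeSet H θH S :=
    fun v i g => int_flow_tail G τ (D := .vy v i) (horig v) g
  -- x and y vertices
  have hx : ∀ i : Fin ℓ, HVert.xx i ∈ activeSet H θH S := by
    intro i
    refine mem_activeSet_of_inj (fun v : V => HVert.gad (.vx v i) .h) ?_ ?_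
      (fun v => hvx v i .h) ?_
    · intro a b hab; simpa using hab
    · intro v; exact adjI_head (.vx v i)
    · simp [tauH, Nat.card_eq_fintype_card]
  have hy : ∀ i : Fin ℓ, HVert.yy i ∈ activeSet H θH S := by
    intro i
    refine mem_activeSet_of_inj (fun v : V => HVert.gad (.vy v i) .h) ?_ ?_
      (fun v => hvy v i .h) ?_
    · intro a b hab; simpa using hab
    · intro v; exact adjI_head (.vy v i)
    · simp [tauH, Nat.card_eq_fintype_card]
  -- gadgets with x/y tails
  have hxa : ∀ (i : Fin ℓ) (v : V) (j : Fin (d v)) g,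
      HVert.gad (.xa i v j) g ∈ activeSet H θH S :=
    fun i v j g => int_flow_tail G τ (D := .xa i v j) (hx i) g
  have hyb : ∀ (i : Fin ℓ) (v : V) (j : Fin (d v)) g,
      HVert.gad (.yb i v j) g ∈ activeSet H θH S :=
    fun i v j g => int_flow_tail G τ (D := .yb i v j) (hy i) g
  -- a and b vertices
  have ha : ∀ (v : V) (j : Fin (d v)), HVert.aa v j ∈ activeSet H θH S := by
    intro v j
    refine mem_activeSet_of_inj (fun i : Fin ℓ => HVert.gad (.xa i v j) .h) ?_ ?_
      (fun i => hxa i v j .h) ?_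
    · intro a b hab; simpa using hab
    · intro i; exact adjI_head (.xa i v j)
    · simp [tauH]
  have hb : ∀ (v : V) (j : Fin (d v)), HVert.bb v j ∈ activeSet H θH S := by
    intro v j
    refine mem_activeSet_of_inj (fun i : Fin ℓ => HVert.gad (.yb i v j) .h) ?_ ?_
      (fun i => hyb i v j .h) ?_
    · intro a b hab; simpa using hab
    · intro i; exact adjI_head (.yb i v j)
    · simp [tauH]
  -- gadgets with a/b tails
  have hav : ∀ (v : V) (j : Fin (d v)) g, HVert.gad (.av v j) g ∈ activeSet H θH S :=
    fun v j g => int_flow_tail G τ (D := .av v j) (ha v j) g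
  have hbv : ∀ (v : V) (j : Fin (d v)) g, HVert.gad (.bv v j) g ∈ activeSet H θH S :=
    fun v j g => int_flow_tail G τ (D := .bv v j) (hb v j) g
  refine Set.eq_univ_of_forall ?_
  intro w
  cases w with
  | orig v => exact horig v
  | xx i => exact hx i
  | yy i => exact hy i
  | aa v j => exact ha v j
  | bb v j => exact hb v j
  | gad D g =>
    cases D with
    | vx v i => exact hvx v i g
    | xa i v j => exact hxa i v j g
    | av v j => exact hav v j g
    | vy v i => exact hvy v i g
    | yb i v j => exact hyb i v j g
    | bv v j => exact hbv v j g

/-- If all of `X` is in `S`, then `S` is a target set of `H`. -/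
lemma target_of_X (hτd : ∀ v, τ v ≤ d v) (hX : XSet V ℓ d ⊆ S) : IsTargetSet H θH S := by
  have hx : ∀ i : Fin ℓ, HVert.xx i ∈ activeSet H θH S :=
    fun i => subset_activeSet (hX ⟨i, rfl⟩)
  have hxa : ∀ (i : Fin ℓ) (v : V) (j : Fin (d v)) g,
      HVert.gad (.xa i v j) g ∈ activeSet H θH S :=
    fun i v j g => int_flow_tail G τ (D := .xa i v j) (hx i) g
  have ha : ∀ (v : V) (j : Fin (d v)), HVert.aa v j ∈ activeSet H θH S := by
    intro v j
    refine mem_activeSet_of_inj (fun i : Fin ℓ => HVert.gad (.xa i v j) .h) ?_ ?_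
      (fun i => hxa i v j .h) ?_
    · intro a b hab; simpa using hab
    · intro i; exact adjI_head (.xa i v j)
    · simp [tauH]
  have hav : ∀ (v : V) (j : Fin (d v)) g, HVert.gad (.av v j) g ∈ activeSet H θH S :=
    fun v j g => int_flow_tail G τ (D := .av v j) (ha v j) g
  have horig : ∀ v, HVert.orig v ∈ activeSet H θH S := by
    intro v
    refine mem_activeSet_of_inj (fun j : Fin (d v) => HVert.gad (.av v j) .h) ?_ ?_
      (fun j => hav v j .h) ?_
    · intro a b hab; simpa using hab
    · intro j; exact adjI_head (.av v j)
    · simpa [tauH] using hτd v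
  exact univ_of_orig G τ hτd horig

/-- If all of `Y` is in `S`, then `S` is a target set of `H`. -/
lemma target_of_Y (hτd : ∀ v, τ v ≤ d v) (hY : YSet V ℓ d ⊆ S) : IsTargetSet H θH S := by
  have hy : ∀ i : Fin ℓ, HVert.yy i ∈ activeSet H θH S :=
    fun i => subset_activeSet (hY ⟨i, rfl⟩)
  have hyb : ∀ (i : Fin ℓ) (v : V) (j : Fin (d v)) g,
      HVert.gad (.yb i v j) g ∈ activeSet H θH S :=
    fun i v j g => int_flow_tail G τ (D := .yb i v j) (hy i) g
  have hb : ∀ (v : V) (j : Fin (d v)), HVert.bb v j ∈ activeSet H θH S := by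
    intro v j
    refine mem_activeSet_of_inj (fun i : Fin ℓ => HVert.gad (.yb i v j) .h) ?_ ?_
      (fun i => hyb i v j .h) ?_
    · intro a b hab; simpa using hab
    · intro i; exact adjI_head (.yb i v j)
    · simp [tauH]
  have hbv : ∀ (v : V) (j : Fin (d v)) g, HVert.gad (.bv v j) g ∈ activeSet H θH S :=
    fun v j g => int_flow_tail G τ (D := .bv v j) (hb v j) g
  have horig : ∀ v, HVert.orig v ∈ activeSet H θH S := by
    intro v
    refine mem_activeSet_of_inj (fun j : Fin (d v) => HVert.gad (.bv v j) .h) ?_ ?_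
      (fun j => hbv v j .h) ?_
    · intro a b hab; simpa using hab
    · intro j; exact adjI_head (.bv v j)
    · simpa [tauH] using hτd v
  exact univ_of_orig G τ hτd horig

/-- If the original part of `S` is a target set of `G`, then `S` is a target set of `H`. -/
lemma target_of_G (hτd : ∀ v, τ v ≤ d v)
    (hG : IsTargetSet G τ {v | HVert.orig v ∈ S}) : IsTargetSet H θH S := by
  have horig : ∀ v, HVert.orig v ∈ activeSet H θH S := by
    have main : ∀ i v, v ∈ activeAt G τ {v | HVert.orig v ∈ S} i →
        HVert.orig v ∈ activeSet H θH S := by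
      intro i
      induction i with
      | zero => intro v hv; exact subset_activeSet hv
      | succ i ih =>
        rintro v (hv | hv)
        · exact ih v hv
        · set P := G.neighborSet v ∩ activeAt G τ {v | HVert.orig v ∈ S} i with hP
          refine mem_activeSet_of_inj (fun u : P => HVert.orig u.1) ?_ ?_ ?_ ?_
          · intro a b hab
            ext
            simpa using hab
          · rintro ⟨u, hu1, hu2⟩; exact adjI_orig hu1
          · rintro ⟨u, hu1, hu2⟩; exact ih u hu2
          · show τ v ≤ _
            rw [Nat.card_coe_set_eq]
            exact hv
    intro v
    have : v ∈ activeSet G τ {v | HVert.orig v ∈ S} := by rw [hG]; trivial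
    rcases Set.mem_iUnion.1 this with ⟨i, hi⟩
    exact main i v hi
  exact univ_of_orig G τ hτd horig

end Cascade

end TSS
namespace TSS

section Blocking

variable {V : Type*} [Fintype V] {ℓ : ℕ} {d : V → ℕ} (G : SimpleGraph V) (τ : V → ℕ)

local notation "H" => graphH G ℓ d
local notation "θH" => tauH τ (Fintype.card V) ℓ d

/-- The blocking set used in the hard direction of the characterization. -/
def blockU (T : Set V) (i0 i1 : Fin ℓ) : Set (HVert V ℓ d) := fun w =>
  match w with
  | .orig v => v ∉ T
  | .xx i => i = i0
  | .yy i => i = i1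
  | .aa _ _ => True
  | .bb _ _ => True
  | .gad D _ =>
    match D with
    | .vx v _ => v ∉ T
    | .vy v _ => v ∉ T
    | .xa i _ _ => i = i0
    | .yb i _ _ => i = i1
    | .av _ _ => True
    | .bv _ _ => True

/-- Characterization, hard direction: a target set of `H` avoiding gadget internals and
`A ∪ B` must contain `X`, contain `Y`, or restrict to a target set of `G`. -/
lemma char_target {S : Set (HVert V ℓ d)}
    (hS : S ⊆ Set.range HVert.orig ∪ XSet V ℓ d ∪ YSet V ℓ d)
    (htar : IsTargetSet H θH S) :
    XSet V ℓ d ⊆ S ∨ YSet V ℓ d ⊆ S ∨ IsTargetSet G τ {v | HVert.orig v ∈ S} := by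
  by_contra hcon
  push_neg at hcon
  obtain ⟨hX, hY, hG⟩ := hcon
  rw [XSet, Set.range_subset_iff] at hX
  rw [YSet, Set.range_subset_iff] at hY
  push_neg at hX hY
  obtain ⟨i0, hi0⟩ := hX
  obtain ⟨i1, hi1⟩ := hY
  set SV : Set V := {v | HVert.orig v ∈ S} with hSV
  set T : Set V := activeSet G τ SV with hTdef
  have hTne : T ≠ Set.univ := hG
  obtain ⟨v₀, hv₀⟩ : ∃ v₀, v₀ ∉ T := by
    by_contra hc
    push_neg at hc
    exact hTne (Set.eq_univ_of_forall hc)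
  set U : Set (HVert V ℓ d) := blockU T i0 i1 with hU
  -- S avoids U
  have hSF : S ⊆ Uᶜ := by
    intro w hw
    rcases hS hw with (⟨v, rfl⟩ | ⟨i, rfl⟩) | ⟨i, rfl⟩
    · intro hc
      exact hc (subset_activeSet hw)
    · intro hc
      have : i = i0 := hc
      exact hi0 (this ▸ hw)
    · intro hc
      have : i = i1 := hc
      exact hi1 (this ▸ hw)
  -- U blocks activation
  have hclosed : ∀ w, θH w ≤ ((graphH G ℓ d).neighborSet w ∩ Uᶜ).ncard → w ∈ Uᶜ := by
    intro w hw
    by_contra hwU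
    rw [Set.notMem_compl_iff] at hwU
    -- per shape, contradict the count
    cases w with
    | orig v =>
      have hvT : v ∉ T := hwU
      have hsub : (graphH G ℓ d).neighborSet (HVert.orig v) ∩ Uᶜ ⊆
          HVert.orig '' (G.neighborSet v ∩ T) := by
        rintro u ⟨hadj, hF⟩
        rcases adj_orig hadj with ⟨w', rfl, hadj'⟩ | ⟨i, rfl⟩ | ⟨i, rfl⟩ | ⟨j, rfl⟩ | ⟨j, rfl⟩
        · refine ⟨w', ⟨hadj', ?_⟩, rfl⟩
          by_contra hc
          exact hF hc
        · exact absurd (show HVert.gad (.vx v i) GadVert.t ∈ U from hvT) hF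
        · exact absurd (show HVert.gad (.vy v i) GadVert.t ∈ U from hvT) hF
        · exact absurd (show HVert.gad (.av v j) GadVert.h ∈ U from trivial) hF
        · exact absurd (show HVert.gad (.bv v j) GadVert.h ∈ U from trivial) hF
      have hlt : ((graphH G ℓ d).neighborSet (HVert.orig v) ∩ Uᶜ).ncard <
          τ v := by
        have h1 : ((graphH G ℓ d).neighborSet (HVert.orig v) ∩ Uᶜ).ncard ≤
            (G.neighborSet v ∩ T).ncard := by
          refine le_trans (Set.ncard_le_ncard hsub (Set.toFinite _)) ?_
          rw [Set.ncard_image_of_injective _ (fun a b hab => by simpa using hab)]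
        have h2 : ¬(τ v ≤ (G.neighborSet v ∩ T).ncard) := by
          intro hc
          exact hvT (mem_activeSet_of_card hc)
        omega
      exact absurd hw (by simpa [tauH] using Nat.not_le.2 hlt)
    | xx i =>
      have hii : i = i0 := hwU
      subst hii
      have hsub : (graphH G ℓ d).neighborSet (HVert.xx i) ∩ Uᶜ ⊆
          (fun v => HVert.gad (.vx v i) GadVert.h) '' T := by
        rintro u ⟨hadj, hF⟩
        rcases adj_xx hadj with ⟨v, rfl⟩ | ⟨v, j, rfl⟩
        · refine ⟨v, ?_, rfl⟩
          by_contra hc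
          exact hF hc
        · exact absurd (show HVert.gad (.xa i v j) GadVert.t ∈ U from rfl) hF
      have hlt : ((graphH G ℓ d).neighborSet (HVert.xx i) ∩ Uᶜ).ncard < Fintype.card V := by
        have h1 : ((graphH G ℓ d).neighborSet (HVert.xx i) ∩ Uᶜ).ncard ≤ T.ncard := by
          refine le_trans (Set.ncard_le_ncard hsub (Set.toFinite _)) ?_
          rw [Set.ncard_image_of_injective _ (fun a b hab => by simpa using hab)]
        have h2 : T.ncard < (Set.univ : Set V).ncard :=
          Set.ncard_lt_ncard (Set.ssubset_univ_iff.2 hTne) (Set.toFinite _)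
        rw [Set.ncard_univ, Nat.card_eq_fintype_card] at h2
        omega
      exact absurd hw (by simpa [tauH] using Nat.not_le.2 hlt)
    | yy i =>
      have hii : i = i1 := hwU
      subst hii
      have hsub : (graphH G ℓ d).neighborSet (HVert.yy i) ∩ Uᶜ ⊆
          (fun v => HVert.gad (.vy v i) GadVert.h) '' T := by
        rintro u ⟨hadj, hF⟩
        rcases adj_yy hadj with ⟨v, rfl⟩ | ⟨v, j, rfl⟩
        · refine ⟨v, ?_, rfl⟩
          by_contra hc
          exact hF hc
        · exact absurd (show HVert.gad (.yb i v j) GadVert.t ∈ U from rfl) hF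
      have hlt : ((graphH G ℓ d).neighborSet (HVert.yy i) ∩ Uᶜ).ncard < Fintype.card V := by
        have h1 : ((graphH G ℓ d).neighborSet (HVert.yy i) ∩ Uᶜ).ncard ≤ T.ncard := by
          refine le_trans (Set.ncard_le_ncard hsub (Set.toFinite _)) ?_
          rw [Set.ncard_image_of_injective _ (fun a b hab => by simpa using hab)]
        have h2 : T.ncard < (Set.univ : Set V).ncard :=
          Set.ncard_lt_ncard (Set.ssubset_univ_iff.2 hTne) (Set.toFinite _)
        rw [Set.ncard_univ, Nat.card_eq_fintype_card] at h2
        omega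
      exact absurd hw (by simpa [tauH] using Nat.not_le.2 hlt)
    | aa v j =>
      have hsub : (graphH G ℓ d).neighborSet (HVert.aa v j) ∩ Uᶜ ⊆
          (fun i => HVert.gad (.xa i v j) GadVert.h) '' {i | i ≠ i0} := by
        rintro u ⟨hadj, hF⟩
        rcases adj_aa hadj with ⟨i, rfl⟩ | rfl
        · refine ⟨i, ?_, rfl⟩
          intro hc
          exact hF (show HVert.gad (.xa i v j) GadVert.h ∈ U from hc)
        · exact absurd (show HVert.gad (.av v j) GadVert.t ∈ U from trivial) hF
      have hlt : ((graphH G ℓ d).neighborSet (HVert.aa v j) ∩ Uᶜ).ncard < ℓ := by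
        have h1 : ((graphH G ℓ d).neighborSet (HVert.aa v j) ∩ Uᶜ).ncard ≤
            ({i : Fin ℓ | i ≠ i0}).ncard := by
          refine le_trans (Set.ncard_le_ncard hsub (Set.toFinite _)) ?_
          rw [Set.ncard_image_of_injective _ (fun a b hab => by simpa using hab)]
        have h2 : ({i : Fin ℓ | i ≠ i0}).ncard < (Set.univ : Set (Fin ℓ)).ncard := by
          refine Set.ncard_lt_ncard ?_ (Set.toFinite _)
          constructor
          · exact Set.subset_univ _
          · intro hsub2
            exact (hsub2 (Set.mem_univ i0)) rfl
        rw [Set.ncard_univ, Nat.card_eq_fintype_card, Fintype.card_fin] at h2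
        omega
      exact absurd hw (by simpa [tauH] using Nat.not_le.2 hlt)
    | bb v j =>
      have hsub : (graphH G ℓ d).neighborSet (HVert.bb v j) ∩ Uᶜ ⊆
          (fun i => HVert.gad (.yb i v j) GadVert.h) '' {i | i ≠ i1} := by
        rintro u ⟨hadj, hF⟩
        rcases adj_bb hadj with ⟨i, rfl⟩ | rfl
        · refine ⟨i, ?_, rfl⟩
          intro hc
          exact hF (show HVert.gad (.yb i v j) GadVert.h ∈ U from hc)
        · exact absurd (show HVert.gad (.bv v j) GadVert.t ∈ U from trivial) hF
      have hlt : ((graphH G ℓ d).neighborSet (HVert.bb v j) ∩ Uᶜ).ncard < ℓ := by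
        have h1 : ((graphH G ℓ d).neighborSet (HVert.bb v j) ∩ Uᶜ).ncard ≤
            ({i : Fin ℓ | i ≠ i1}).ncard := by
          refine le_trans (Set.ncard_le_ncard hsub (Set.toFinite _)) ?_
          rw [Set.ncard_image_of_injective _ (fun a b hab => by simpa using hab)]
        have h2 : ({i : Fin ℓ | i ≠ i1}).ncard < (Set.univ : Set (Fin ℓ)).ncard := by
          refine Set.ncard_lt_ncard ?_ (Set.toFinite _)
          constructor
          · exact Set.subset_univ _
          · intro hsub2
            exact (hsub2 (Set.mem_univ i1)) rfl
        rw [Set.ncard_univ, Nat.card_eq_fintype_card, Fintype.card_fin] at h2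
        omega
      exact absurd hw (by simpa [tauH] using Nat.not_le.2 hlt)
    | gad D g =>
      -- every internal vertex of a `U`-gadget sees at most the head outside `U`
      have hUD : ∀ g', HVert.gad D g' ∈ U := by
        intro g'
        cases D <;> exact hwU
      have htailU : gadTail D ∈ U := by
        cases D <;> exact hwU
      cases g with
      | t =>
        have hsub : (graphH G ℓ d).neighborSet (HVert.gad D .t) ∩ Uᶜ ⊆ ∅ := by
          rintro u ⟨hadj, hF⟩
          rcases adj_gad_t hadj with rfl | rfl | rfl
          · exact hF htailU
          · exact hF (hUD .b1)
          · exact hF (hUD .b2)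
        have : ((graphH G ℓ d).neighborSet (HVert.gad D .t) ∩ Uᶜ).ncard = 0 := by
          rw [Set.eq_empty_iff_forall_notMem.2 (fun x hx => hsub hx)]
          exact Set.ncard_empty _
        rw [show θH (HVert.gad D .t) = 1 from rfl, this] at hw
        omega
      | b1 =>
        have hsub : (graphH G ℓ d).neighborSet (HVert.gad D .b1) ∩ Uᶜ ⊆ ∅ := by
          rintro u ⟨hadj, hF⟩
          rcases adj_gad_b1 hadj with rfl | rfl
          · exact hF (hUD .t)
          · exact hF (hUD .h)
        have : ((graphH G ℓ d).neighborSet (HVert.gad D .b1) ∩ Uᶜ).ncard = 0 := by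
          rw [Set.eq_empty_iff_forall_notMem.2 (fun x hx => hsub hx)]
          exact Set.ncard_empty _
        rw [show θH (HVert.gad D .b1) = 1 from rfl, this] at hw
        omega
      | b2 =>
        have hsub : (graphH G ℓ d).neighborSet (HVert.gad D .b2) ∩ Uᶜ ⊆ ∅ := by
          rintro u ⟨hadj, hF⟩
          rcases adj_gad_b2 hadj with rfl | rfl
          · exact hF (hUD .t)
          · exact hF (hUD .h)
        have : ((graphH G ℓ d).neighborSet (HVert.gad D .b2) ∩ Uᶜ).ncard = 0 := by
          rw [Set.eq_empty_iff_forall_notMem.2 (fun x hx => hsub hx)]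
          exact Set.ncard_empty _
        rw [show θH (HVert.gad D .b2) = 1 from rfl, this] at hw
        omega
      | h =>
        have hsub : (graphH G ℓ d).neighborSet (HVert.gad D .h) ∩ Uᶜ ⊆ {gadHead D} := by
          rintro u ⟨hadj, hF⟩
          rcases adj_gad_h hadj with rfl | rfl | rfl
          · rfl
          · exact absurd (hUD .b1) hF
          · exact absurd (hUD .b2) hF
        have hle : ((graphH G ℓ d).neighborSet (HVert.gad D .h) ∩ Uᶜ).ncard ≤ 1 := by
          refine le_trans (Set.ncard_le_ncard hsub (Set.toFinite _)) ?_
          simp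
        rw [show θH (HVert.gad D .h) = 2 from rfl] at hw
        omega
  have hblock := activeSet_subset_of_closed hSF hclosed
  have : HVert.orig v₀ ∈ activeSet H θH S := by
    rw [htar]; trivial
  exact (hblock this) (show HVert.orig v₀ ∈ U from hv₀)

end Blocking

end TSS
namespace TSS

variable {V : Type*} {ℓ : ℕ} {d : V → ℕ}

/-- Projection of seeds to non-gadget vertices: internal gadget seeds are replaced by the
tail of their gadget, and `A ∪ B` seeds by the corresponding original vertex. -/
def proj : HVert V ℓ d → HVert V ℓ d
  | .orig v => .orig v
  | .xx i => .xx i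
  | .yy i => .yy i
  | .aa v _ => .orig v
  | .bb v _ => .orig v
  | .gad (.vx v _) _ => .orig v
  | .gad (.xa i _ _) _ => .xx i
  | .gad (.av v _) _ => .orig v
  | .gad (.vy v _) _ => .orig v
  | .gad (.yb i _ _) _ => .yy i
  | .gad (.bv v _) _ => .orig v

lemma proj_mem_good (w : HVert V ℓ d) :
    proj w ∈ Set.range HVert.orig ∪ XSet V ℓ d ∪ YSet V ℓ d := by
  rcases w with v | i | i | ⟨v, j⟩ | ⟨v, j⟩ | ⟨D, g⟩
  · exact Or.inl (Or.inl ⟨v, rfl⟩)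
  · exact Or.inl (Or.inr ⟨i, rfl⟩)
  · exact Or.inr ⟨i, rfl⟩
  · exact Or.inl (Or.inl ⟨v, rfl⟩)
  · exact Or.inl (Or.inl ⟨v, rfl⟩)
  · rcases D with ⟨v, i⟩ | ⟨i, v, j⟩ | ⟨v, j⟩ | ⟨v, i⟩ | ⟨i, v, j⟩ | ⟨v, j⟩
    · exact Or.inl (Or.inl ⟨v, rfl⟩)
    · exact Or.inl (Or.inr ⟨i, rfl⟩)
    · exact Or.inl (Or.inl ⟨v, rfl⟩)
    · exact Or.inl (Or.inl ⟨v, rfl⟩)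
    · exact Or.inr ⟨i, rfl⟩
    · exact Or.inl (Or.inl ⟨v, rfl⟩)

@[simp] lemma proj_xx (i : Fin ℓ) : proj (HVert.xx i : HVert V ℓ d) = HVert.xx i := rfl
@[simp] lemma proj_yy (i : Fin ℓ) : proj (HVert.yy i : HVert V ℓ d) = HVert.yy i := rfl

lemma proj_image_X : proj '' (XSet V ℓ d) = XSet V ℓ d := by
  ext w
  constructor
  · rintro ⟨u, ⟨i, rfl⟩, rfl⟩; exact ⟨i, rfl⟩
  · rintro ⟨i, rfl⟩; exact ⟨HVert.xx i, ⟨i, rfl⟩, rfl⟩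

lemma proj_image_Y : proj '' (YSet V ℓ d) = YSet V ℓ d := by
  ext w
  constructor
  · rintro ⟨u, ⟨i, rfl⟩, rfl⟩; exact ⟨i, rfl⟩
  · rintro ⟨i, rfl⟩; exact ⟨HVert.yy i, ⟨i, rfl⟩, rfl⟩

section Transform

variable [Fintype V] (G : SimpleGraph V) (τ : V → ℕ)

local notation "H" => graphH G ℓ d
local notation "θH" => tauH τ (Fintype.card V) ℓ d

/-- Seed projection preserves being a target set. -/
lemma transform_target {S : Set (HVert V ℓ d)} (htar : IsTargetSet H θH S) :
    IsTargetSet H θH (proj '' S) := by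
  classical
  set T₀ : Set (HVert V ℓ d) := activeSet H θH (proj '' S) with hT₀
  have hseed : ∀ w ∈ S, proj w ∈ T₀ := fun w hw => subset_activeSet ⟨w, hw, rfl⟩
  set SeedA : ∀ (v : V), Fin (d v) → Prop :=
    fun v j => HVert.aa v j ∈ S ∨ ∃ g, HVert.gad (.av v j) g ∈ S with hSeedA
  set SeedB : ∀ (v : V), Fin (d v) → Prop :=
    fun v j => HVert.bb v j ∈ S ∨ ∃ g, HVert.gad (.bv v j) g ∈ S with hSeedB
  have hSeedA_T₀ : ∀ v j, SeedA v j → HVert.orig v ∈ T₀ := by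
    rintro v j (h | ⟨g, h⟩)
    · exact hseed _ h
    · exact hseed _ h
  have hSeedB_T₀ : ∀ v j, SeedB v j → HVert.orig v ∈ T₀ := by
    rintro v j (h | ⟨g, h⟩)
    · exact hseed _ h
    · exact hseed _ h
  set EXTRA : Set (HVert V ℓ d) := fun w =>
    match w with
    | .aa v j => SeedA v j
    | .bb v j => SeedB v j
    | .gad (.av v j) _ => SeedA v j
    | .gad (.bv v j) _ => SeedB v j
    | _ => False with hEXTRA
  set F : Set (HVert V ℓ d) := T₀ ∪ EXTRA with hF
  -- S is contained in F
  have hSF : S ⊆ F := by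
    intro w hw
    rcases w with v | i | i | ⟨v, j⟩ | ⟨v, j⟩ | ⟨D, g⟩
    · exact Or.inl (hseed _ hw)
    · exact Or.inl (hseed _ hw)
    · exact Or.inl (hseed _ hw)
    · exact Or.inr (Or.inl hw)
    · exact Or.inr (Or.inl hw)
    · rcases D with ⟨v, i⟩ | ⟨i, v, j⟩ | ⟨v, j⟩ | ⟨v, i⟩ | ⟨i, v, j⟩ | ⟨v, j⟩
      · exact Or.inl (int_flow_tail G τ (D := .vx v i) (hseed _ hw) g)
      · exact Or.inl (int_flow_tail G τ (D := .xa i v j) (hseed _ hw) g)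
      · exact Or.inr (Or.inr ⟨g, hw⟩)
      · exact Or.inl (int_flow_tail G τ (D := .vy v i) (hseed _ hw) g)
      · exact Or.inl (int_flow_tail G τ (D := .yb i v j) (hseed _ hw) g)
      · exact Or.inr (Or.inr ⟨g, hw⟩)
  -- F is closed
  have hclosed : ∀ w, θH w ≤ ((graphH G ℓ d).neighborSet w ∩ F).ncard → w ∈ F := by
    have hsubT₀ : ∀ w : HVert V ℓ d,
        ((graphH G ℓ d).neighborSet w ∩ F ⊆ (graphH G ℓ d).neighborSet w ∩ T₀) →
        θH w ≤ ((graphH G ℓ d).neighborSet w ∩ F).ncard → w ∈ T₀ := by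
      intro w hsub hw
      exact mem_activeSet_of_card
        (le_trans hw (Set.ncard_le_ncard hsub (Set.toFinite _)))
    intro w hw
    rcases w with v | i | i | ⟨v, j⟩ | ⟨v, j⟩ | ⟨D, g⟩
    · -- original vertices
      by_cases hA : (∃ j, SeedA v j) ∨ (∃ j, SeedB v j)
      · rcases hA with ⟨j, hj⟩ | ⟨j, hj⟩
        · exact Or.inl (hSeedA_T₀ v j hj)
        · exact Or.inl (hSeedB_T₀ v j hj)
      · push_neg at hA
        refine Or.inl (hsubT₀ _ ?_ hw)
        rintro u ⟨hadj, hFu⟩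
        refine ⟨hadj, ?_⟩
        rcases adj_orig hadj with ⟨w', rfl, hadj'⟩ | ⟨i, rfl⟩ | ⟨i, rfl⟩ | ⟨j, rfl⟩ | ⟨j, rfl⟩ <;>
          rcases hFu with h | h
        · exact h
        · exact h.elim
        · exact h
        · exact h.elim
        · exact h
        · exact h.elim
        · exact h
        · exact absurd (show SeedA v j from h) (hA.1 j)
        · exact h
        · exact absurd (show SeedB v j from h) (hA.2 j)
    · -- x vertices
      refine Or.inl (hsubT₀ _ ?_ hw)
      rintro u ⟨hadj, hFu⟩
      refine ⟨hadj, ?_⟩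
      rcases adj_xx hadj with ⟨v, rfl⟩ | ⟨v, j, rfl⟩ <;> rcases hFu with h | h
      · exact h
      · exact h.elim
      · exact h
      · exact h.elim
    · -- y vertices
      refine Or.inl (hsubT₀ _ ?_ hw)
      rintro u ⟨hadj, hFu⟩
      refine ⟨hadj, ?_⟩
      rcases adj_yy hadj with ⟨v, rfl⟩ | ⟨v, j, rfl⟩ <;> rcases hFu with h | h
      · exact h
      · exact h.elim
      · exact h
      · exact h.elim
    · -- a vertices
      by_cases hA : SeedA v j
      · exact Or.inr hA
      · refine Or.inl (hsubT₀ _ ?_ hw)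
        rintro u ⟨hadj, hFu⟩
        refine ⟨hadj, ?_⟩
        rcases adj_aa hadj with ⟨i, rfl⟩ | rfl <;> rcases hFu with h | h
        · exact h
        · exact h.elim
        · exact h
        · exact absurd (show SeedA v j from h) hA
    · -- b vertices
      by_cases hB : SeedB v j
      · exact Or.inr hB
      · refine Or.inl (hsubT₀ _ ?_ hw)
        rintro u ⟨hadj, hFu⟩
        refine ⟨hadj, ?_⟩
        rcases adj_bb hadj with ⟨i, rfl⟩ | rfl <;> rcases hFu with h | h
        · exact h
        · exact h.elim
        · exact h
        · exact absurd (show SeedB v j from h) hB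
    · -- gadget internal vertices
      rcases D with ⟨v, i⟩ | ⟨i, v, j⟩ | ⟨v, j⟩ | ⟨v, i⟩ | ⟨i, v, j⟩ | ⟨v, j⟩
      · -- vx gadgets: all neighbours are in T₀ when in F
        refine Or.inl (hsubT₀ _ ?_ hw)
        rintro u ⟨hadj, hFu⟩
        refine ⟨hadj, ?_⟩
        cases g with
        | t => rcases adj_gad_t hadj with rfl | rfl | rfl <;> rcases hFu with h | h <;>
              first | exact h | exact h.elim
        | h => rcases adj_gad_h hadj with rfl | rfl | rfl <;> rcases hFu with h | h <;>
              first | exact h | exact h.elim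
        | b1 => rcases adj_gad_b1 hadj with rfl | rfl <;> rcases hFu with h | h <;>
              first | exact h | exact h.elim
        | b2 => rcases adj_gad_b2 hadj with rfl | rfl <;> rcases hFu with h | h <;>
              first | exact h | exact h.elim
      · -- xa gadgets: the head may be in EXTRA; use the internal flow trick
        cases g with
        | t =>
          refine Or.inl (hsubT₀ _ ?_ hw)
          rintro u ⟨hadj, hFu⟩
          refine ⟨hadj, ?_⟩
          rcases adj_gad_t hadj with rfl | rfl | rfl <;> rcases hFu with h | h <;>
              first | exact h | exact h.elim
        | b1 =>
          refine Or.inl (hsubT₀ _ ?_ hw)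
          rintro u ⟨hadj, hFu⟩
          refine ⟨hadj, ?_⟩
          rcases adj_gad_b1 hadj with rfl | rfl <;> rcases hFu with h | h <;>
              first | exact h | exact h.elim
        | b2 =>
          refine Or.inl (hsubT₀ _ ?_ hw)
          rintro u ⟨hadj, hFu⟩
          refine ⟨hadj, ?_⟩
          rcases adj_gad_b2 hadj with rfl | rfl <;> rcases hFu with h | h <;>
              first | exact h | exact h.elim
        | h =>
          by_cases hb : HVert.gad (.xa i v j) GadVert.b1 ∈ T₀ ∨
              HVert.gad (.xa i v j) GadVert.b2 ∈ T₀
          · rcases hb with hb | hb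
            · exact Or.inl (int_flow_any G τ hb .h)
            · exact Or.inl (int_flow_any G τ hb .h)
          · push_neg at hb
            exfalso
            have hsub : (graphH G ℓ d).neighborSet (HVert.gad (.xa i v j) .h) ∩ F ⊆
                {HVert.aa v j} := by
              rintro u ⟨hadj, hFu⟩
              rcases adj_gad_h hadj with rfl | rfl | rfl
              · rfl
              · rcases hFu with h | h
                · exact absurd h hb.1
                · exact h.elim
              · rcases hFu with h | h
                · exact absurd h hb.2
                · exact h.elim
            have hle : ((graphH G ℓ d).neighborSet (HVert.gad (.xa i v j) .h) ∩ F).ncard ≤ 1 :=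
              le_trans (Set.ncard_le_ncard hsub (Set.toFinite _)) (by simp)
            rw [show θH (HVert.gad (.xa i v j) .h) = 2 from rfl] at hw
            omega
      · -- av gadgets
        by_cases hA : SeedA v j
        · exact Or.inr hA
        · refine Or.inl (hsubT₀ _ ?_ hw)
          rintro u ⟨hadj, hFu⟩
          refine ⟨hadj, ?_⟩
          cases g with
          | t =>
            rcases adj_gad_t hadj with rfl | rfl | rfl <;> rcases hFu with h | h
            · exact h
            · exact absurd (show SeedA v j from h) hA
            · exact h
            · exact absurd (show SeedA v j from h) hA
            · exact h
            · exact absurd (show SeedA v j from h) hA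
          | h =>
            rcases adj_gad_h hadj with rfl | rfl | rfl <;> rcases hFu with h | h
            · exact h
            · exact h.elim
            · exact h
            · exact absurd (show SeedA v j from h) hA
            · exact h
            · exact absurd (show SeedA v j from h) hA
          | b1 =>
            rcases adj_gad_b1 hadj with rfl | rfl <;> rcases hFu with h | h
            · exact h
            · exact absurd (show SeedA v j from h) hA
            · exact h
            · exact absurd (show SeedA v j from h) hA
          | b2 =>
            rcases adj_gad_b2 hadj with rfl | rfl <;> rcases hFu with h | h
            · exact h
            · exact absurd (show SeedA v j from h) hA
            · exact h
            · exact absurd (show SeedA v j from h) hA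
      · -- vy gadgets
        refine Or.inl (hsubT₀ _ ?_ hw)
        rintro u ⟨hadj, hFu⟩
        refine ⟨hadj, ?_⟩
        cases g with
        | t => rcases adj_gad_t hadj with rfl | rfl | rfl <;> rcases hFu with h | h <;>
              first | exact h | exact h.elim
        | h => rcases adj_gad_h hadj with rfl | rfl | rfl <;> rcases hFu with h | h <;>
              first | exact h | exact h.elim
        | b1 => rcases adj_gad_b1 hadj with rfl | rfl <;> rcases hFu with h | h <;>
              first | exact h | exact h.elim
        | b2 => rcases adj_gad_b2 hadj with rfl | rfl <;> rcases hFu with h | h <;>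
              first | exact h | exact h.elim
      · -- yb gadgets
        cases g with
        | t =>
          refine Or.inl (hsubT₀ _ ?_ hw)
          rintro u ⟨hadj, hFu⟩
          refine ⟨hadj, ?_⟩
          rcases adj_gad_t hadj with rfl | rfl | rfl <;> rcases hFu with h | h <;>
              first | exact h | exact h.elim
        | b1 =>
          refine Or.inl (hsubT₀ _ ?_ hw)
          rintro u ⟨hadj, hFu⟩
          refine ⟨hadj, ?_⟩
          rcases adj_gad_b1 hadj with rfl | rfl <;> rcases hFu with h | h <;>
              first | exact h | exact h.elim
        | b2 =>
          refine Or.inl (hsubT₀ _ ?_ hw)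
          rintro u ⟨hadj, hFu⟩
          refine ⟨hadj, ?_⟩
          rcases adj_gad_b2 hadj with rfl | rfl <;> rcases hFu with h | h <;>
              first | exact h | exact h.elim
        | h =>
          by_cases hb : HVert.gad (.yb i v j) GadVert.b1 ∈ T₀ ∨
              HVert.gad (.yb i v j) GadVert.b2 ∈ T₀
          · rcases hb with hb | hb
            · exact Or.inl (int_flow_any G τ hb .h)
            · exact Or.inl (int_flow_any G τ hb .h)
          · push_neg at hb
            exfalso
            have hsub : (graphH G ℓ d).neighborSet (HVert.gad (.yb i v j) .h) ∩ F ⊆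
                {HVert.bb v j} := by
              rintro u ⟨hadj, hFu⟩
              rcases adj_gad_h hadj with rfl | rfl | rfl
              · rfl
              · rcases hFu with h | h
                · exact absurd h hb.1
                · exact h.elim
              · rcases hFu with h | h
                · exact absurd h hb.2
                · exact h.elim
            have hle : ((graphH G ℓ d).neighborSet (HVert.gad (.yb i v j) .h) ∩ F).ncard ≤ 1 :=
              le_trans (Set.ncard_le_ncard hsub (Set.toFinite _)) (by simp)
            rw [show θH (HVert.gad (.yb i v j) .h) = 2 from rfl] at hw
            omega
      · -- bv gadgets
        by_cases hB : SeedB v j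
        · exact Or.inr hB
        · refine Or.inl (hsubT₀ _ ?_ hw)
          rintro u ⟨hadj, hFu⟩
          refine ⟨hadj, ?_⟩
          cases g with
          | t =>
            rcases adj_gad_t hadj with rfl | rfl | rfl <;> rcases hFu with h | h
            · exact h
            · exact absurd (show SeedB v j from h) hB
            · exact h
            · exact absurd (show SeedB v j from h) hB
            · exact h
            · exact absurd (show SeedB v j from h) hB
          | h =>
            rcases adj_gad_h hadj with rfl | rfl | rfl <;> rcases hFu with h | h
            · exact h
            · exact h.elim
            · exact h
            · exact absurd (show SeedB v j from h) hB
            · exact h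
            · exact absurd (show SeedB v j from h) hB
          | b1 =>
            rcases adj_gad_b1 hadj with rfl | rfl <;> rcases hFu with h | h
            · exact h
            · exact absurd (show SeedB v j from h) hB
            · exact h
            · exact absurd (show SeedB v j from h) hB
          | b2 =>
            rcases adj_gad_b2 hadj with rfl | rfl <;> rcases hFu with h | h
            · exact h
            · exact absurd (show SeedB v j from h) hB
            · exact h
            · exact absurd (show SeedB v j from h) hB
  -- the real active set stays inside F
  have hAF : Set.univ ⊆ F := by
    rw [← htar]
    exact activeSet_subset_of_closed hSF hclosed
  -- endgame: all of EXTRA is in fact in T₀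
  have haT₀ : ∀ (v : V) (j : Fin (d v)), HVert.aa v j ∈ T₀ := by
    intro v j
    have hhead : ∀ i : Fin ℓ, HVert.gad (.xa i v j) GadVert.h ∈ T₀ := by
      intro i
      rcases hAF (Set.mem_univ (HVert.gad (.xa i v j) GadVert.h)) with h | h
      · exact h
      · exact h.elim
    refine mem_activeSet_of_inj (fun i : Fin ℓ => HVert.gad (.xa i v j) GadVert.h) ?_ ?_
      hhead ?_
    · intro a b hab; simpa using hab
    · intro i; exact adjI_head (.xa i v j)
    · simp [tauH]
  have hbT₀ : ∀ (v : V) (j : Fin (d v)), HVert.bb v j ∈ T₀ := by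
    intro v j
    have hhead : ∀ i : Fin ℓ, HVert.gad (.yb i v j) GadVert.h ∈ T₀ := by
      intro i
      rcases hAF (Set.mem_univ (HVert.gad (.yb i v j) GadVert.h)) with h | h
      · exact h
      · exact h.elim
    refine mem_activeSet_of_inj (fun i : Fin ℓ => HVert.gad (.yb i v j) GadVert.h) ?_ ?_
      hhead ?_
    · intro a b hab; simpa using hab
    · intro i; exact adjI_head (.yb i v j)
    · simp [tauH]
  refine Set.eq_univ_of_univ_subset ?_
  intro w hwuniv
  rcases hAF hwuniv with h | h
  · exact h
  · rcases w with v | i | i | ⟨v, j⟩ | ⟨v, j⟩ | ⟨D, g⟩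
    · exact h.elim
    · exact h.elim
    · exact h.elim
    · exact haT₀ v j
    · exact hbT₀ v j
    · rcases D with ⟨v, i⟩ | ⟨i, v, j⟩ | ⟨v, j⟩ | ⟨v, i⟩ | ⟨i, v, j⟩ | ⟨v, j⟩
      · exact h.elim
      · exact h.elim
      · exact int_flow_tail G τ (D := .av v j) (haT₀ v j) g
      · exact h.elim
      · exact h.elim
      · exact int_flow_tail G τ (D := .bv v j) (hbT₀ v j) g

end Transform

end TSS
namespace TSS

section Steps

variable {α : Type*} [Finite α] {A B : Set α} {z : α}

lemma subset_or_subset_of_symmDiff_one (h : (symmDiff A B).ncard = 1) : A ⊆ B ∨ B ⊆ A := by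
  by_contra hc
  push_neg at hc
  obtain ⟨⟨a, haA, haB⟩, ⟨b, hbB, hbA⟩⟩ :
      (∃ a, a ∈ A ∧ a ∉ B) ∧ (∃ b, b ∈ B ∧ b ∉ A) := by
    constructor
    · rcases Set.not_subset.1 hc.1 with ⟨a, h1, h2⟩; exact ⟨a, h1, h2⟩
    · rcases Set.not_subset.1 hc.2 with ⟨b, h1, h2⟩; exact ⟨b, h1, h2⟩
  have hab : a ≠ b := fun hh => hbA (hh ▸ haA)
  have hsub : {a, b} ⊆ symmDiff A B := by
    rintro x (rfl | rfl)
    · exact Or.inl ⟨haA, haB⟩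
    · exact Or.inr ⟨hbB, hbA⟩
  have h2 : ({a, b} : Set α).ncard = 2 := by
    rw [Set.ncard_pair hab]
  have := Set.ncard_le_ncard hsub (Set.toFinite _)
  omega

lemma ncard_symmDiff_union (hz : z ∉ A) : (symmDiff A (A ∪ {z})).ncard = 1 := by
  have : symmDiff A (A ∪ {z}) = {z} := by
    ext x
    simp only [Set.mem_symmDiff, Set.mem_union, Set.mem_singleton_iff]
    constructor
    · rintro (⟨h1, h2⟩ | ⟨h1, h2⟩)
      · exact absurd (Or.inl h1) h2
      · rcases h1 with h1 | h1
        · exact absurd h1 h2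
        · exact h1
    · rintro rfl
      exact Or.inr ⟨Or.inr rfl, hz⟩
  rw [this, Set.ncard_singleton]

lemma ncard_symmDiff_diff (hz : z ∈ A) : (symmDiff A (A \ {z})).ncard = 1 := by
  have : symmDiff A (A \ {z}) = {z} := by
    ext x
    simp only [Set.mem_symmDiff, Set.mem_diff, Set.mem_singleton_iff]
    constructor
    · rintro (⟨h1, h2⟩ | ⟨h1, h2⟩)
      · by_contra hne
        exact h2 ⟨h1, hne⟩
      · exact absurd h1.1 h2
    · rintro rfl
      exact Or.inl ⟨hz, fun hh => hh.2 rfl⟩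
  rw [this, Set.ncard_singleton]

end Steps

section Count

variable {V : Type*} [Fintype V] {ℓ : ℕ} {d : V → ℕ}

lemma xx_injective : Function.Injective (HVert.xx : Fin ℓ → HVert V ℓ d) := by
  intro a b hab; simpa using hab

lemma yy_injective : Function.Injective (HVert.yy : Fin ℓ → HVert V ℓ d) := by
  intro a b hab; simpa using hab

lemma orig_injective : Function.Injective (HVert.orig : V → HVert V ℓ d) := by
  intro a b hab; simpa using hab

lemma ncard_XSet : (XSet V ℓ d).ncard = ℓ := by
  rw [XSet, ← Nat.card_coe_set_eq, Nat.card_range_of_injective xx_injective,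
    Nat.card_eq_fintype_card, Fintype.card_fin]

lemma ncard_YSet : (YSet V ℓ d).ncard = ℓ := by
  rw [YSet, ← Nat.card_coe_set_eq, Nat.card_range_of_injective yy_injective,
    Nat.card_eq_fintype_card, Fintype.card_fin]

lemma disj_X_Y : Disjoint (XSet V ℓ d) (YSet V ℓ d) := by
  rw [Set.disjoint_left]
  rintro w ⟨i, rfl⟩ ⟨i', hc⟩
  cases hc

lemma disj_X_orig (s : Set V) : Disjoint (XSet V ℓ d) (HVert.orig '' s) := by
  rw [Set.disjoint_left]
  rintro w ⟨i, rfl⟩ ⟨v, _, hc⟩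
  cases hc

end Count

end TSS
namespace TSS

section Main

variable {V : Type*} [Fintype V] {ℓ : ℕ} {d : V → ℕ} (G : SimpleGraph V) (τ : V → ℕ)

local notation "H" => graphH G ℓ d
local notation "θH" => tauH τ (Fintype.card V) ℓ d

/-- Lower bound: every reconfiguration sequence from `X` to `Y` has size `> ks + ℓ`. -/
lemma seq_lower_bound {ks : ℕ} (hℓ : 1 ≤ ℓ) (hks : ks + 1 ≤ ℓ) (hopt : ks < optTS G τ)
    {T : ℕ} {Sfam : ℕ → Set (HVert V ℓ d)}
    (hseq : IsReconfSeq H θH (XSet V ℓ d) (YSet V ℓ d) T Sfam) :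
    ks + ℓ < seqSize T Sfam := by
  by_contra hcap
  push_neg at hcap
  have hsz : ∀ t ≤ T, (Sfam t).ncard ≤ ks + ℓ := by
    intro t ht
    refine le_trans ?_ hcap
    exact Finset.le_sup (f := fun t => (Sfam t).ncard) (Finset.mem_range.2 (by omega))
  -- the invariant: `X` stays inside the projected seed set
  have main : ∀ t, t ≤ T → XSet V ℓ d ⊆ proj '' Sfam t := by
    intro t
    induction t with
    | zero =>
      intro _
      rw [hseq.head, proj_image_X]
    | succ t ih =>
      intro hT
      have hXt := ih (by omega)
      have hstep := hseq.step t (by omega)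
      rcases subset_or_subset_of_symmDiff_one hstep with hsub | hsub
      · exact hXt.trans (Set.image_mono hsub)
      · -- removal step: use the characterization of the projected target set
        have htar' : IsTargetSet H θH (proj '' Sfam (t+1)) :=
          transform_target G τ (hseq.target (t+1) hT)
        have hgood : proj '' Sfam (t+1) ⊆
            Set.range HVert.orig ∪ XSet V ℓ d ∪ YSet V ℓ d := by
          rintro w ⟨u, _, rfl⟩
          exact proj_mem_good u
        rcases char_target G τ hgood htar' with hX | hY | hG
        · exact hX
        · -- both X and Y inside `proj '' Sfam t`: too big
          exfalso
          have hYt : YSet V ℓ d ⊆ proj '' Sfam t :=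
            hY.trans (Set.image_mono hsub)
          have hunion : XSet V ℓ d ∪ YSet V ℓ d ⊆ proj '' Sfam t :=
            Set.union_subset hXt hYt
          have h1 : (XSet V ℓ d ∪ YSet V ℓ d).ncard ≤ (proj '' Sfam t).ncard :=
            Set.ncard_le_ncard hunion (Set.toFinite _)
          have h2 : (XSet V ℓ d ∪ YSet V ℓ d).ncard = ℓ + ℓ := by
            rw [Set.ncard_union_eq disj_X_Y (Set.toFinite _) (Set.toFinite _),
              ncard_XSet, ncard_YSet]
          have h3 : (proj '' Sfam t).ncard ≤ (Sfam t).ncard :=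
            Set.ncard_image_le (Set.toFinite _)
          have h4 := hsz t (by omega)
          omega
        · -- a `G`-target inside `proj '' Sfam t`: too big together with X
          exfalso
          set SV : Set V := {v | HVert.orig v ∈ proj '' Sfam (t+1)} with hSV
          have hSVcard : ks + 1 ≤ SV.ncard := by
            have : optTS G τ ≤ SV.ncard := Nat.sInf_le ⟨SV, hG, rfl⟩
            omega
          have horig : HVert.orig '' SV ⊆ proj '' Sfam t := by
            rintro w ⟨v, hv, rfl⟩
            exact (Set.image_mono hsub) hv
          have hunion : XSet V ℓ d ∪ HVert.orig '' SV ⊆ proj '' Sfam t :=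
            Set.union_subset hXt horig
          have h1 : (XSet V ℓ d ∪ HVert.orig '' SV).ncard ≤ (proj '' Sfam t).ncard :=
            Set.ncard_le_ncard hunion (Set.toFinite _)
          have h2 : (XSet V ℓ d ∪ HVert.orig '' SV).ncard = ℓ + SV.ncard := by
            rw [Set.ncard_union_eq (disj_X_orig SV) (Set.toFinite _) (Set.toFinite _),
              ncard_XSet, Set.ncard_image_of_injective _ orig_injective]
          have h3 : (proj '' Sfam t).ncard ≤ (Sfam t).ncard :=
            Set.ncard_image_le (Set.toFinite _)
          have h4 := hsz t (by omega)
          omega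
  -- at the end, X would sit inside Y: impossible
  have hend := main T le_rfl
  rw [hseq.last, proj_image_Y] at hend
  obtain ⟨i, hc⟩ := hend ⟨(⟨0, by omega⟩ : Fin ℓ), rfl⟩
  cases hc

end Main

end TSS
namespace TSS

section Std

variable {V : Type*} [Fintype V] {ℓ : ℕ} {d : V → ℕ} (G : SimpleGraph V) (τ : V → ℕ)

local notation "H" => graphH G ℓ d
local notation "θH" => tauH τ (Fintype.card V) ℓ d

/-- The standard reconfiguration sequence: first add all of `Y`, then remove all of `X`. -/
def stdSeq (V : Type*) (ℓ : ℕ) (d : V → ℕ) (t : ℕ) : Set (HVert V ℓ d) :=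
  {w | ∃ i : Fin ℓ, (w = HVert.xx i ∧ t ≤ ℓ + i.val) ∨ (w = HVert.yy i ∧ i.val < t)}

lemma stdSeq_zero : stdSeq V ℓ d 0 = XSet V ℓ d := by
  ext w
  constructor
  · rintro ⟨i, ⟨rfl, _⟩ | ⟨rfl, hi⟩⟩
    · exact ⟨i, rfl⟩
    · omega
  · rintro ⟨i, rfl⟩
    exact ⟨i, Or.inl ⟨rfl, by omega⟩⟩

lemma stdSeq_last : stdSeq V ℓ d (2 * ℓ) = YSet V ℓ d := by
  ext w
  constructor
  · rintro ⟨i, ⟨rfl, hi⟩ | ⟨rfl, _⟩⟩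
    · have := i.isLt; omega
    · exact ⟨i, rfl⟩
  · rintro ⟨i, rfl⟩
    exact ⟨i, Or.inr ⟨rfl, by have := i.isLt; omega⟩⟩

lemma stdSeq_X {t : ℕ} (ht : t ≤ ℓ) : XSet V ℓ d ⊆ stdSeq V ℓ d t := by
  rintro w ⟨i, rfl⟩
  exact ⟨i, Or.inl ⟨rfl, by omega⟩⟩

lemma stdSeq_Y {t : ℕ} (ht : ℓ ≤ t) : YSet V ℓ d ⊆ stdSeq V ℓ d t := by
  rintro w ⟨i, rfl⟩
  exact ⟨i, Or.inr ⟨rfl, by have := i.isLt; omega⟩⟩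

lemma stdSeq_step_add {t : ℕ} (ht : t < ℓ) :
    stdSeq V ℓ d (t + 1) = stdSeq V ℓ d t ∪ {HVert.yy ⟨t, ht⟩} ∧
      HVert.yy (⟨t, ht⟩ : Fin ℓ) ∉ stdSeq V ℓ d t := by
  constructor
  · ext w
    constructor
    · rintro ⟨i, ⟨rfl, hi⟩ | ⟨rfl, hi⟩⟩
      · exact Or.inl ⟨i, Or.inl ⟨rfl, by omega⟩⟩
      · rcases Nat.lt_or_ge i.val t with h | h
        · exact Or.inl ⟨i, Or.inr ⟨rfl, h⟩⟩
        · have : i = (⟨t, ht⟩ : Fin ℓ) := by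
            apply Fin.ext; simp; omega
          subst this
          exact Or.inr rfl
    · rintro (⟨i, ⟨rfl, hi⟩ | ⟨rfl, hi⟩⟩ | hw)
      · exact ⟨i, Or.inl ⟨rfl, by omega⟩⟩
      · exact ⟨i, Or.inr ⟨rfl, by omega⟩⟩
      · rw [Set.mem_singleton_iff] at hw
        subst hw
        exact ⟨⟨t, ht⟩, Or.inr ⟨rfl, by simp⟩⟩
  · rintro ⟨i, ⟨hc, _⟩ | ⟨hc, hi⟩⟩
    · cases hc
    · have : i = (⟨t, ht⟩ : Fin ℓ) := yy_injective hc.symm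
      subst this
      simp at hi
end Std

end TSS
namespace TSS

section Std2

variable {V : Type*} [Fintype V] {ℓ : ℕ} {d : V → ℕ} (G : SimpleGraph V) (τ : V → ℕ)

local notation "H" => graphH G ℓ d
local notation "θH" => tauH τ (Fintype.card V) ℓ d

lemma stdSeq_step_rem {t : ℕ} (ht : ℓ ≤ t) (ht2 : t < 2 * ℓ) :
    stdSeq V ℓ d (t + 1) = stdSeq V ℓ d t \ {HVert.xx ⟨t - ℓ, by omega⟩} ∧
      HVert.xx (⟨t - ℓ, by omega⟩ : Fin ℓ) ∈ stdSeq V ℓ d t := by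
  constructor
  · ext w
    constructor
    · rintro ⟨i, ⟨rfl, hi⟩ | ⟨rfl, hi⟩⟩
      · refine ⟨⟨i, Or.inl ⟨rfl, by omega⟩⟩, ?_⟩
        intro hc
        rw [Set.mem_singleton_iff] at hc
        have hiv : i.val = t - ℓ := by
          have := xx_injective hc
          simpa using congrArg Fin.val this
        omega
      · refine ⟨⟨i, Or.inr ⟨rfl, by omega⟩⟩, ?_⟩
        intro hc
        rw [Set.mem_singleton_iff] at hc
        cases hc
    · rintro ⟨⟨i, ⟨rfl, hi⟩ | ⟨rfl, hi⟩⟩, hw⟩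
      · refine ⟨i, Or.inl ⟨rfl, ?_⟩⟩
        rw [Set.mem_singleton_iff] at hw
        have hine : i ≠ (⟨t - ℓ, by omega⟩ : Fin ℓ) := fun hc => hw (by rw [hc])
        have : i.val ≠ t - ℓ := by
          intro hc
          exact hine (Fin.ext (by simpa using hc))
        omega
      · rcases Nat.lt_or_ge i.val (t + 1) with h | h
        · exact ⟨i, Or.inr ⟨rfl, h⟩⟩
        · omega
  · exact ⟨⟨t - ℓ, by omega⟩, Or.inl ⟨rfl, by simp; omega⟩⟩

lemma stdSeq_isReconf (hτd : ∀ v, τ v ≤ d v) :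
    IsReconfSeq H θH (XSet V ℓ d) (YSet V ℓ d) (2 * ℓ) (stdSeq V ℓ d) := by
  refine ⟨stdSeq_zero, stdSeq_last, ?_, ?_⟩
  · intro t ht
    rcases Nat.lt_or_ge ℓ (t+1) with h | h
    · exact target_of_Y G τ hτd (stdSeq_Y (by omega))
    · exact target_of_X G τ hτd (stdSeq_X (by omega))
  · intro t ht
    rcases Nat.lt_or_ge t ℓ with h | h
    · obtain ⟨heq, hmem⟩ := stdSeq_step_add (V := V) (d := d) h
      rw [heq]
      exact ncard_symmDiff_union hmem
    · obtain ⟨heq, hmem⟩ := stdSeq_step_rem (V := V) (d := d) h ht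
      rw [heq]
      exact ncard_symmDiff_diff hmem

end Std2

end TSS
open TSS in
/-- Soundness: if `ℓ ≥ k_s + 1` and `opt(G) > k_s`, then `opt_H(X ⇝ Y) > k_s + ℓ`. -/
theorem stmt7 {V : Type*} [Fintype V] (G : SimpleGraph V) [DecidableRel G.Adj] (τ : V → ℕ)
    (ℓ : ℕ) (hℓ : 1 ≤ ℓ) (hiso : ∀ v : V, 0 < G.degree v) (hτ : ∀ v : V, τ v ≤ G.degree v)
    (ks : ℕ) (hks : ks + 1 ≤ ℓ) (hopt : ks < optTS G τ) :
    ks + ℓ < optReconf (graphH G ℓ (fun v => G.degree v)) (tauH τ (Fintype.card V) ℓ (fun v => G.degree v))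
      (XSet V ℓ (fun v => G.degree v)) (YSet V ℓ (fun v => G.degree v)) := by
  classical
  rw [optReconf]
  have hne : {m | ∃ T Sfam,
      IsReconfSeq (graphH G ℓ (fun v => G.degree v))
        (tauH τ (Fintype.card V) ℓ (fun v => G.degree v))
        (XSet V ℓ (fun v => G.degree v)) (YSet V ℓ (fun v => G.degree v)) T Sfam ∧
      seqSize T Sfam = m}.Nonempty :=
    ⟨_, 2 * ℓ, stdSeq V ℓ (fun v => G.degree v), stdSeq_isReconf G τ hτ, rfl⟩
  obtain ⟨T, Sfam, hseq, hsz⟩ := Nat.sInf_mem hne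
  calc ks + ℓ < seqSize T Sfam := seq_lower_bound G τ hℓ hks hopt hseq
    _ = _ := by
        rw [hsz]
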